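/- Let 0 < μ ≤ 1/2 and 0 < p < 1. Then d(μ, μ(1−p)) ≤ p²μ / (2(1−p)(1 − μ(1−p))). Moreover, if 0 < p ≤ 1 and μ(1+p) < 1, then d(μ, μ(1+p)) ≤ p²μ / (2(1 − μ(1+p))). -/

import Mathlib

/-- The KL divergence `d(x,y)` between `Bernoulli(x)` and `Bernoulli(y)`. -/
noncomputable def klBer (x y : ℝ) : ℝ :=
  x * Real.log (x / y) + (1 - x) * Real.log ((1 - x) / (1 - y))

lemma integral_affine (c K a b : ℝ) (hK : K ≠ 0) :
    ∫ t in a..b, (t - c) / K = ((b - c) ^ 2 - (a - c) ^ 2) / (2 * K) := by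
  have h : ∀ t ∈ Set.uIcc a b, HasDerivAt (fun t => (t - c) ^ 2 / (2 * K)) ((t - c) / K) t := by
    intro t _
    have h1 : HasDerivAt (fun t : ℝ => (t - c) ^ 2 / (2 * K))
        (((2 : ℕ) * (t - c) ^ (2 - 1) * 1) / (2 * K)) t :=
      (((hasDerivAt_id t).sub_const c).pow 2).div_const _
    convert h1 using 1
    field_simp
    ring
  rw [intervalIntegral.integral_eq_sub_of_hasDerivAt h
    ((Continuous.continuousOn (by continuity)).intervalIntegrable)]
  ring

lemma klBer_eq_integral (x y : ℝ) (hx0 : 0 < x) (hx1 : x < 1)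
    (hmem : ∀ t ∈ Set.uIcc x y, 0 < t ∧ t < 1) :
    klBer x y = ∫ t in x..y, (t - x) / (t * (1 - t)) := by
  set g : ℝ → ℝ := fun t => x * (Real.log x - Real.log t)
      + (1 - x) * (Real.log (1 - x) - Real.log (1 - t)) with hg
  have hderiv : ∀ t ∈ Set.uIcc x y, HasDerivAt g ((t - x) / (t * (1 - t))) t := by
    intro t ht
    obtain ⟨ht0, ht1⟩ := hmem t ht
    have h1 : HasDerivAt (fun t : ℝ => Real.log t) t⁻¹ t := Real.hasDerivAt_log ht0.ne'
    have h2 : HasDerivAt (fun t : ℝ => Real.log (1 - t)) (-1 / (1 - t)) t :=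
      ((hasDerivAt_id t).const_sub 1).log (by simp; linarith)
    have h3 := (((hasDerivAt_const t (Real.log x)).sub h1).const_mul x).add
      (((hasDerivAt_const t (Real.log (1 - x))).sub h2).const_mul (1 - x))
    have hne1 : t ≠ 0 := ht0.ne'
    have hne2 : (1 : ℝ) - t ≠ 0 := by linarith
    rw [show (t - x) / (t * (1 - t)) = x * (0 - t⁻¹) + (1 - x) * (0 - -1 / (1 - t)) by
      field_simp
      ring]
    exact h3
  have hcont : ContinuousOn (fun t : ℝ => (t - x) / (t * (1 - t))) (Set.uIcc x y) := by
    apply ContinuousOn.div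
    · fun_prop
    · fun_prop
    · intro t ht
      obtain ⟨ht0, ht1⟩ := hmem t ht
      have : 0 < t * (1 - t) := by nlinarith
      exact this.ne'
  rw [intervalIntegral.integral_eq_sub_of_hasDerivAt hderiv hcont.intervalIntegrable]
  have hy0 := (hmem y Set.right_mem_uIcc).1
  have hy1 := (hmem y Set.right_mem_uIcc).2
  simp only [hg]
  unfold klBer
  rw [Real.log_div hx0.ne' hy0.ne',
    Real.log_div (by linarith : (1 : ℝ) - x ≠ 0) (by linarith : (1 : ℝ) - y ≠ 0)]
  ring

lemma klBer_le_of_lt (x y : ℝ) (hy0 : 0 < y) (hyx : y < x) (hx : x ≤ 1 / 2) :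
    klBer x y ≤ (x - y) ^ 2 / (2 * (y * (1 - y))) := by
  have hx0 : 0 < x := hy0.trans hyx
  have hx1 : x < 1 := by linarith
  have hy1 : y < 1 := by linarith
  have hK : 0 < y * (1 - y) := by nlinarith
  have hmem : ∀ t ∈ Set.uIcc x y, 0 < t ∧ t < 1 := by
    intro t ht
    rw [Set.uIcc_of_ge hyx.le] at ht
    exact ⟨hy0.trans_le ht.1, lt_of_le_of_lt ht.2 hx1⟩
  rw [klBer_eq_integral x y hx0 hx1 hmem, intervalIntegral.integral_symm]
  have hint1 : IntervalIntegrable (fun t : ℝ => (t - x) / (y * (1 - y)))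
      MeasureTheory.volume y x :=
    (Continuous.continuousOn (by continuity)).intervalIntegrable
  have hint2 : IntervalIntegrable (fun t : ℝ => (t - x) / (t * (1 - t)))
      MeasureTheory.volume y x := by
    apply ContinuousOn.intervalIntegrable
    apply ContinuousOn.div
    · fun_prop
    · fun_prop
    · intro t ht
      rw [Set.uIcc_of_le hyx.le] at ht
      have ht0 : 0 < t := hy0.trans_le ht.1
      have ht1 : t < 1 := lt_of_le_of_lt ht.2 hx1
      have : 0 < t * (1 - t) := by nlinarith
      exact this.ne'
  have hmono : ∫ t in y..x, (t - x) / (y * (1 - y))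
      ≤ ∫ t in y..x, (t - x) / (t * (1 - t)) := by
    apply intervalIntegral.integral_mono_on hyx.le hint1 hint2
    intro t ht
    have ht0 : 0 < t := hy0.trans_le ht.1
    have ht1 : t < 1 := lt_of_le_of_lt ht.2 hx1
    have hD : 0 < t * (1 - t) := by nlinarith
    rw [div_le_div_iff₀ hK hD]
    have h1 : 0 ≤ (t - y) * (1 - t - y) :=
      mul_nonneg (by linarith [ht.1]) (by linarith [ht.2])
    have h2 : t - x ≤ 0 := by linarith [ht.2]
    nlinarith [mul_nonpos_of_nonpos_of_nonneg h2 h1]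
  have hval : ∫ t in y..x, (t - x) / (y * (1 - y))
      = -((x - y) ^ 2 / (2 * (y * (1 - y)))) := by
    rw [integral_affine x (y * (1 - y)) y x hK.ne']
    rw [eq_neg_iff_add_eq_zero]
    field_simp
    ring
  linarith [hmono, hval.symm.le, hval.le]

lemma klBer_le_of_gt (x y : ℝ) (hx0 : 0 < x) (hxy : x < y) (hy1 : y < 1) :
    klBer x y ≤ (y - x) ^ 2 / (2 * (x * (1 - y))) := by
  have hx1 : x < 1 := hxy.trans hy1
  have hK : 0 < x * (1 - y) := by nlinarith
  have hmem : ∀ t ∈ Set.uIcc x y, 0 < t ∧ t < 1 := by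
    intro t ht
    rw [Set.uIcc_of_le hxy.le] at ht
    exact ⟨hx0.trans_le ht.1, lt_of_le_of_lt ht.2 hy1⟩
  rw [klBer_eq_integral x y hx0 hx1 hmem]
  have hint1 : IntervalIntegrable (fun t : ℝ => (t - x) / (t * (1 - t)))
      MeasureTheory.volume x y := by
    apply ContinuousOn.intervalIntegrable
    apply ContinuousOn.div
    · fun_prop
    · fun_prop
    · intro t ht
      obtain ⟨ht0, ht1⟩ := hmem t ht
      have : 0 < t * (1 - t) := by nlinarith
      exact this.ne'
  have hint2 : IntervalIntegrable (fun t : ℝ => (t - x) / (x * (1 - y)))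
      MeasureTheory.volume x y :=
    (Continuous.continuousOn (by continuity)).intervalIntegrable
  have hmono : ∫ t in x..y, (t - x) / (t * (1 - t))
      ≤ ∫ t in x..y, (t - x) / (x * (1 - y)) := by
    apply intervalIntegral.integral_mono_on hxy.le hint1 hint2
    intro t ht
    have ht0 : 0 < t := hx0.trans_le ht.1
    have ht1 : t < 1 := lt_of_le_of_lt ht.2 hy1
    have hD : 0 < t * (1 - t) := by nlinarith
    rw [div_le_div_iff₀ hD hK]
    have h1 : 0 ≤ t - x := by linarith [ht.1]
    have h4 : x * (1 - y) ≤ t * (1 - t) :=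
      mul_le_mul ht.1 (by linarith [ht.2]) (by linarith) ht0.le
    exact mul_le_mul_of_nonneg_left h4 h1
  have hval : ∫ t in x..y, (t - x) / (x * (1 - y))
      = (y - x) ^ 2 / (2 * (x * (1 - y))) := by
    rw [integral_affine x (x * (1 - y)) x y hK.ne']
    ring_nf
  linarith [hmono, hval.le]

theorem stmt_9 (μ p : ℝ) (hμ0 : 0 < μ) (hμ : μ ≤ 1 / 2) :
    (0 < p → p < 1 →
        klBer μ (μ * (1 - p)) ≤ p ^ 2 * μ / (2 * (1 - p) * (1 - μ * (1 - p)))) ∧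
      (0 < p → p ≤ 1 → μ * (1 + p) < 1 →
        klBer μ (μ * (1 + p)) ≤ p ^ 2 * μ / (2 * (1 - μ * (1 + p)))) := by
  constructor
  · intro hp0 hp1
    have hy0 : 0 < μ * (1 - p) := by nlinarith
    have hyx : μ * (1 - p) < μ := by nlinarith
    have h := klBer_le_of_lt μ (μ * (1 - p)) hy0 hyx hμ
    have heq : (μ - μ * (1 - p)) ^ 2 / (2 * (μ * (1 - p) * (1 - μ * (1 - p))))
        = p ^ 2 * μ / (2 * (1 - p) * (1 - μ * (1 - p))) := by
      have h1 : (0:ℝ) < 1 - μ * (1 - p) := by nlinarith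
      rw [div_eq_div_iff (by nlinarith [mul_pos (mul_pos hy0 h1) (two_pos (α := ℝ))])
        (by nlinarith [mul_pos (show (0:ℝ) < 1 - p by linarith) h1])]
      ring
    calc klBer μ (μ * (1 - p)) ≤ _ := h
      _ = _ := heq
  · intro hp0 hp1 hy1
    have hxy : μ < μ * (1 + p) := by nlinarith
    have h := klBer_le_of_gt μ (μ * (1 + p)) hμ0 hxy hy1
    have heq : (μ * (1 + p) - μ) ^ 2 / (2 * (μ * (1 - μ * (1 + p))))
        = p ^ 2 * μ / (2 * (1 - μ * (1 + p))) := by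
      have h1 : (0:ℝ) < 1 - μ * (1 + p) := by linarith
      rw [div_eq_div_iff (by nlinarith [mul_pos hμ0 h1]) (by linarith)]
      ring
    calc klBer μ (μ * (1 + p)) ≤ _ := h
      _ = _ := heq
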